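/- Let d > 1 be a positive integer and let ω(d) denote the number of distinct prime divisors of d. If d ≤ 2 + 2^{ω(d)+1}, then d ∈ {2, 3, 4, 5, 6, 10}. -/
import Mathlib

lemma aux_growth (n : ℕ) : 2 + 2 ^ (n + 4) < 6 * 5 ^ (n + 1) := by
  induction n with
  | zero => norm_num
  | succ m ih =>
    have h2 : 2 ^ (m + 1 + 4) = 2 * 2 ^ (m + 4) := by ring
    have h5 : 5 ^ (m + 1 + 1) = 5 * 5 ^ (m + 1) := by ring
    rw [h2, h5]
    nlinarith [pow_pos (by norm_num : (0:ℕ) < 5) (m+1)]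

lemma prod_primeFactors_lb (d : ℕ) (hc : 2 ≤ d.primeFactors.card) :
    6 * 5 ^ (d.primeFactors.card - 2) ≤ ∏ p ∈ d.primeFactors, p := by
  set s := d.primeFactors with hs
  have hp5 : ∀ p ∈ s, p ≠ 2 → p ≠ 3 → 5 ≤ p := by
    intro p hp h2 h3
    have hprime : p.Prime := Nat.prime_of_mem_primeFactors hp
    have h4 : p ≠ 4 := by
      intro h; rw [h] at hprime; norm_num at hprime
    have := hprime.two_le
    omega
  by_cases h2 : 2 ∈ s
  · by_cases h3 : 3 ∈ s
    · -- both 2 and 3 in s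
      have h3' : 3 ∈ s.erase 2 := Finset.mem_erase.mpr ⟨by norm_num, h3⟩
      have hge : ∀ p ∈ (s.erase 2).erase 3, 5 ≤ p := by
        intro p hp
        have hp3 := Finset.ne_of_mem_erase hp
        have hp' := Finset.mem_of_mem_erase hp
        have hp2 := Finset.ne_of_mem_erase hp'
        exact hp5 p (Finset.mem_of_mem_erase hp') hp2 hp3
      have hb : 5 ^ ((s.erase 2).erase 3).card ≤ ∏ p ∈ (s.erase 2).erase 3, p :=
        Finset.pow_card_le_prod _ _ _ hge
      have hcard : ((s.erase 2).erase 3).card = s.card - 2 := by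
        rw [Finset.card_erase_of_mem h3', Finset.card_erase_of_mem h2]
        omega
      rw [hcard] at hb
      have e1 : ∏ p ∈ s, p = 2 * ∏ p ∈ s.erase 2, p :=
        (Finset.mul_prod_erase s id h2).symm
      have e2 : ∏ p ∈ s.erase 2, p = 3 * ∏ p ∈ (s.erase 2).erase 3, p :=
        (Finset.mul_prod_erase _ id h3').symm
      rw [e1, e2]
      calc 6 * 5 ^ (s.card - 2) ≤ 6 * ∏ p ∈ (s.erase 2).erase 3, p :=
            Nat.mul_le_mul_left 6 hb
        _ = 2 * (3 * ∏ p ∈ (s.erase 2).erase 3, p) := by ring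
    · -- 2 ∈ s, 3 ∉ s
      have hge : ∀ p ∈ s.erase 2, 5 ≤ p := by
        intro p hp
        have hp2 := Finset.ne_of_mem_erase hp
        have hp' := Finset.mem_of_mem_erase hp
        exact hp5 p hp' hp2 (fun h => h3 (h ▸ hp'))
      have hb : 5 ^ (s.erase 2).card ≤ ∏ p ∈ s.erase 2, p :=
        Finset.pow_card_le_prod _ _ _ hge
      rw [Finset.card_erase_of_mem h2] at hb
      have e1 : ∏ p ∈ s, p = 2 * ∏ p ∈ s.erase 2, p :=
        (Finset.mul_prod_erase s id h2).symm
      have hpow : 6 * 5 ^ (s.card - 2) ≤ 2 * 5 ^ (s.card - 1) := by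
        have : 5 ^ (s.card - 1) = 5 * 5 ^ (s.card - 2) := by
          rw [← pow_succ']; congr 1; omega
        rw [this]; nlinarith [pow_pos (by norm_num : (0:ℕ) < 5) (s.card - 2)]
      rw [e1]
      exact le_trans hpow (Nat.mul_le_mul_left 2 hb)
  · by_cases h3 : 3 ∈ s
    · -- 3 ∈ s, 2 ∉ s
      have hge : ∀ p ∈ s.erase 3, 5 ≤ p := by
        intro p hp
        have hp3 := Finset.ne_of_mem_erase hp
        have hp' := Finset.mem_of_mem_erase hp
        exact hp5 p hp' (fun h => h2 (h ▸ hp')) hp3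
      have hb : 5 ^ (s.erase 3).card ≤ ∏ p ∈ s.erase 3, p :=
        Finset.pow_card_le_prod _ _ _ hge
      rw [Finset.card_erase_of_mem h3] at hb
      have e1 : ∏ p ∈ s, p = 3 * ∏ p ∈ s.erase 3, p :=
        (Finset.mul_prod_erase s id h3).symm
      have hpow : 6 * 5 ^ (s.card - 2) ≤ 3 * 5 ^ (s.card - 1) := by
        have : 5 ^ (s.card - 1) = 5 * 5 ^ (s.card - 2) := by
          rw [← pow_succ']; congr 1; omega
        rw [this]; nlinarith [pow_pos (by norm_num : (0:ℕ) < 5) (s.card - 2)]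
      rw [e1]
      exact le_trans hpow (Nat.mul_le_mul_left 3 hb)
    · -- neither 2 nor 3
      have hge : ∀ p ∈ s, 5 ≤ p := by
        intro p hp
        exact hp5 p hp (fun h => h2 (h ▸ hp)) (fun h => h3 (h ▸ hp))
      have hb : 5 ^ s.card ≤ ∏ p ∈ s, p := Finset.pow_card_le_prod _ _ _ hge
      have hpow : 6 * 5 ^ (s.card - 2) ≤ 5 ^ s.card := by
        have : 5 ^ s.card = 5 * (5 * 5 ^ (s.card - 2)) := by
          rw [← pow_succ', ← pow_succ']; congr 1; omega
        rw [this]; nlinarith [pow_pos (by norm_num : (0:ℕ) < 5) (s.card - 2)]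
      exact le_trans hpow hb

theorem stmt4 (d : ℕ) (hd : 1 < d)
    (h : d ≤ 2 + 2 ^ (d.primeFactors.card + 1)) :
    d = 2 ∨ d = 3 ∨ d = 4 ∨ d = 5 ∨ d = 6 ∨ d = 10 := by
  have hk2 : d.primeFactors.card ≤ 2 := by
    by_contra hk3
    push_neg at hk3
    have hdvd : ∏ p ∈ d.primeFactors, p ∣ d := Nat.prod_primeFactors_dvd d
    have hle : ∏ p ∈ d.primeFactors, p ≤ d := Nat.le_of_dvd (by omega) hdvd
    have hlb := prod_primeFactors_lb d (by omega)
    have hg := aux_growth (d.primeFactors.card - 3)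
    have e1 : d.primeFactors.card - 3 + 4 = d.primeFactors.card + 1 := by omega
    have e2 : d.primeFactors.card - 3 + 1 = d.primeFactors.card - 2 := by omega
    rw [e1, e2] at hg
    omega
  have hd10 : d ≤ 10 := by
    have : 2 ^ (d.primeFactors.card + 1) ≤ 2 ^ 3 :=
      Nat.pow_le_pow_right (by norm_num) (by omega)
    omega
  have c7 : Nat.primeFactors 7 = {7} := Nat.Prime.primeFactors (by norm_num)
  have c8 : Nat.primeFactors 8 = {2} := by
    have : (8 : ℕ) = 2 ^ 3 := by norm_num
    rw [this, Nat.primeFactors_pow 2 (by norm_num),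
      Nat.Prime.primeFactors (by norm_num)]
  have c9 : Nat.primeFactors 9 = {3} := by
    have : (9 : ℕ) = 3 ^ 2 := by norm_num
    rw [this, Nat.primeFactors_pow 3 (by norm_num),
      Nat.Prime.primeFactors (by norm_num)]
  interval_cases d
  · tauto
  · tauto
  · tauto
  · tauto
  · tauto
  · rw [c7] at h; simp at h
  · rw [c8] at h; simp at h
  · rw [c9] at h; simp at h
  · tauto
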